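/- Let X and Y be finite sets, let R ⊆ X × Y be a relation, and let ε, m̲, m̄, m̲', m̄' be nonnegative reals such that: every x ∈ X has m̲ ≤ |{y : (x,y) ∈ R}| ≤ m̄; every y ∈ Y has m̲' ≤ |{x : (x,y) ∈ R}| ≤ m̄'; and m̲ ≥ 2εm̄, m̲' ≥ 2εm̄'. Let X_g ⊆ X and Y_g ⊆ Y satisfy |X∖X_g| ≤ ε|X| and |Y∖Y_g| ≤ ε|Y|. Then |R ∩ (X_g × Y_g)| ≥ (1/2)·((m̲ − 2εm̄)·|X| + (m̲' − 2εm̄')·|Y|) ≥ √((m̲ − 2εm̄)(m̲' − 2εm̄'))·√(|X|·|Y|). -/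

import Mathlib

open Finset

/-- Counting the good part of a relation: if every `x ∈ X` has degree between
`ml` and `mu`, every `y ∈ Y` has degree between `ml'` and `mu'`, the sets of
bad elements have measure at most `ε`, and `ml ≥ 2εmu`, `ml' ≥ 2εmu'`, then
`|R ∩ (X_g × Y_g)| ≥ (1/2)((ml − 2εmu)|X| + (ml' − 2εmu')|Y|)
  ≥ √((ml − 2εmu)(ml' − 2εmu'))·√(|X||Y|)`. -/
theorem stmt_9 {X Y : Type*} [Fintype X] [Fintype Y] [DecidableEq X] [DecidableEq Y]
    (R : Finset (X × Y)) (ε ml mu ml' mu' : ℝ)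
    (hε : 0 ≤ ε) (hml : 0 ≤ ml) (hmu : 0 ≤ mu) (hml' : 0 ≤ ml') (hmu' : 0 ≤ mu')
    (hdegX : ∀ x : X, ml ≤ ((R.filter (fun p => p.1 = x)).card : ℝ) ∧
      ((R.filter (fun p => p.1 = x)).card : ℝ) ≤ mu)
    (hdegY : ∀ y : Y, ml' ≤ ((R.filter (fun p => p.2 = y)).card : ℝ) ∧
      ((R.filter (fun p => p.2 = y)).card : ℝ) ≤ mu')
    (h1 : 2 * ε * mu ≤ ml) (h2 : 2 * ε * mu' ≤ ml')
    (Xg : Finset X) (Yg : Finset Y)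
    (hXg : (((Finset.univ : Finset X) \ Xg).card : ℝ) ≤ ε * Fintype.card X)
    (hYg : (((Finset.univ : Finset Y) \ Yg).card : ℝ) ≤ ε * Fintype.card Y) :
    ((1 / 2) * ((ml - 2 * ε * mu) * (Fintype.card X : ℝ)
          + (ml' - 2 * ε * mu') * (Fintype.card Y : ℝ))
        ≤ ((R.filter (fun p => p.1 ∈ Xg ∧ p.2 ∈ Yg)).card : ℝ)) ∧
    Real.sqrt ((ml - 2 * ε * mu) * (ml' - 2 * ε * mu'))
        * Real.sqrt ((Fintype.card X : ℝ) * (Fintype.card Y : ℝ))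
      ≤ (1 / 2) * ((ml - 2 * ε * mu) * (Fintype.card X : ℝ)
          + (ml' - 2 * ε * mu') * (Fintype.card Y : ℝ)) := by
  constructor
  · -- counting part
    set Rg := R.filter (fun p => p.1 ∈ Xg ∧ p.2 ∈ Yg) with hRg
    set BX := R.filter (fun p => p.1 ∉ Xg) with hBX
    set BY := R.filter (fun p => p.2 ∉ Yg) with hBY
    -- |R| ≤ |Rg| + |BX| + |BY|
    have hsplit : R.card ≤ Rg.card + BX.card + BY.card := by
      calc R.card ≤ (Rg ∪ (BX ∪ BY)).card := by
            apply Finset.card_le_card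
            intro p hp
            simp only [hRg, hBX, hBY, Finset.mem_union, Finset.mem_filter]
            by_cases h : p.1 ∈ Xg <;> by_cases h' : p.2 ∈ Yg <;> tauto
        _ ≤ Rg.card + (BX ∪ BY).card := Finset.card_union_le _ _
        _ ≤ Rg.card + (BX.card + BY.card) := by
            exact Nat.add_le_add_left (Finset.card_union_le _ _) _
        _ = Rg.card + BX.card + BY.card := by ring
    -- |R| ≥ ml * |X|
    have hRX : ml * (Fintype.card X : ℝ) ≤ R.card := by
      have h := Finset.card_eq_sum_card_fiberwise
        (f := Prod.fst) (s := R) (t := (Finset.univ : Finset X)) (fun p _ => Finset.mem_univ _)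
      have : ∑ x : X, ml ≤ ∑ x : X, ((R.filter (fun p => p.1 = x)).card : ℝ) :=
        Finset.sum_le_sum (fun x _ => (hdegX x).1)
      simp only [Finset.sum_const, Finset.card_univ, nsmul_eq_mul, mul_comm] at this
      calc ml * (Fintype.card X : ℝ) = (Fintype.card X : ℝ) * ml := by ring
        _ ≤ ∑ x : X, ((R.filter (fun p => p.1 = x)).card : ℝ) := by
            simpa [mul_comm] using this
        _ = (R.card : ℝ) := by rw [h]; push_cast; ring
    have hRY : ml' * (Fintype.card Y : ℝ) ≤ R.card := by
      have h := Finset.card_eq_sum_card_fiberwise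
        (f := Prod.snd) (s := R) (t := (Finset.univ : Finset Y)) (fun p _ => Finset.mem_univ _)
      have : ∑ y : Y, ml' ≤ ∑ y : Y, ((R.filter (fun p => p.2 = y)).card : ℝ) :=
        Finset.sum_le_sum (fun y _ => (hdegY y).1)
      simp only [Finset.sum_const, Finset.card_univ, nsmul_eq_mul, mul_comm] at this
      calc ml' * (Fintype.card Y : ℝ) = (Fintype.card Y : ℝ) * ml' := by ring
        _ ≤ ∑ y : Y, ((R.filter (fun p => p.2 = y)).card : ℝ) := by
            simpa [mul_comm] using this
        _ = (R.card : ℝ) := by rw [h]; push_cast; ring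
    -- |BX| ≤ mu * |univ \ Xg| ≤ ε mu |X|
    have hBXb : (BX.card : ℝ) ≤ ε * mu * (Fintype.card X : ℝ) := by
      have h := Finset.card_eq_sum_card_fiberwise
        (f := Prod.fst) (s := BX) (t := (Finset.univ : Finset X) \ Xg)
        (fun p hp => by
          simp only [hBX, Finset.mem_coe, Finset.mem_filter] at hp
          simp [hp.2])
      have hb : ∀ x ∈ (Finset.univ : Finset X) \ Xg,
          ((BX.filter (fun p => p.1 = x)).card : ℝ) ≤ mu := by
        intro x _
        refine le_trans ?_ (hdegX x).2
        have : BX.filter (fun p => p.1 = x) ⊆ R.filter (fun p => p.1 = x) := by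
          intro p hp
          simp only [hBX, Finset.mem_filter] at hp ⊢
          tauto
        exact_mod_cast Finset.card_le_card this
      calc (BX.card : ℝ) = ∑ x ∈ (Finset.univ : Finset X) \ Xg,
            ((BX.filter (fun p => p.1 = x)).card : ℝ) := by rw [h]; push_cast; ring
        _ ≤ ∑ x ∈ (Finset.univ : Finset X) \ Xg, mu := Finset.sum_le_sum hb
        _ = (((Finset.univ : Finset X) \ Xg).card : ℝ) * mu := by
            simp [Finset.sum_const, nsmul_eq_mul]
        _ ≤ (ε * Fintype.card X) * mu := by
            exact mul_le_mul_of_nonneg_right hXg hmu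
        _ = ε * mu * (Fintype.card X : ℝ) := by ring
    have hBYb : (BY.card : ℝ) ≤ ε * mu' * (Fintype.card Y : ℝ) := by
      have h := Finset.card_eq_sum_card_fiberwise
        (f := Prod.snd) (s := BY) (t := (Finset.univ : Finset Y) \ Yg)
        (fun p hp => by
          simp only [hBY, Finset.mem_coe, Finset.mem_filter] at hp
          simp [hp.2])
      have hb : ∀ y ∈ (Finset.univ : Finset Y) \ Yg,
          ((BY.filter (fun p => p.2 = y)).card : ℝ) ≤ mu' := by
        intro y _
        refine le_trans ?_ (hdegY y).2
        have : BY.filter (fun p => p.2 = y) ⊆ R.filter (fun p => p.2 = y) := by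
          intro p hp
          simp only [hBY, Finset.mem_filter] at hp ⊢
          tauto
        exact_mod_cast Finset.card_le_card this
      calc (BY.card : ℝ) = ∑ y ∈ (Finset.univ : Finset Y) \ Yg,
            ((BY.filter (fun p => p.2 = y)).card : ℝ) := by rw [h]; push_cast; ring
        _ ≤ ∑ y ∈ (Finset.univ : Finset Y) \ Yg, mu' := Finset.sum_le_sum hb
        _ = (((Finset.univ : Finset Y) \ Yg).card : ℝ) * mu' := by
            simp [Finset.sum_const, nsmul_eq_mul]
        _ ≤ (ε * Fintype.card Y) * mu' := by
            exact mul_le_mul_of_nonneg_right hYg hmu'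
        _ = ε * mu' * (Fintype.card Y : ℝ) := by ring
    have hsplit' : (R.card : ℝ) ≤ Rg.card + BX.card + BY.card := by exact_mod_cast hsplit
    linarith
  · -- AM-GM part
    set a := ml - 2 * ε * mu with ha
    set b := ml' - 2 * ε * mu' with hb
    have ha0 : 0 ≤ a := by linarith
    have hb0 : 0 ≤ b := by linarith
    have hx0 : (0:ℝ) ≤ (Fintype.card X : ℝ) := Nat.cast_nonneg _
    have hy0 : (0:ℝ) ≤ (Fintype.card Y : ℝ) := Nat.cast_nonneg _
    have key : Real.sqrt (a * b) * Real.sqrt ((Fintype.card X : ℝ) * (Fintype.card Y : ℝ))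
        = Real.sqrt (a * (Fintype.card X : ℝ)) * Real.sqrt (b * (Fintype.card Y : ℝ)) := by
      rw [← Real.sqrt_mul (by positivity), ← Real.sqrt_mul (by positivity)]
      ring_nf
    rw [key]
    have h1 := Real.sq_sqrt (mul_nonneg ha0 hx0)
    have h2 := Real.sq_sqrt (mul_nonneg hb0 hy0)
    nlinarith [sq_nonneg (Real.sqrt (a * (Fintype.card X : ℝ)) - Real.sqrt (b * (Fintype.card Y : ℝ)))]
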